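/- Let (A,+) be a cancellative semigroup and X, Y ⊆ A with X + 2Y ⊄ X + Y and ⟨Y⟩ commutative. Fix z ∈ (X + 2Y) \ (X + Y), and set Ỹ_z := {y ∈ Y : z ∈ X + Y + y} and Y_z := Y \ Ỹ_z. Then |X + Y| + |Y_z| ≥ |X + Y_z| + |Y| (Davenport transform inequality). -/

import Mathlib

open scoped Pointwise Classical
open AddSubsemigroup

namespace CD

variable {A : Type*} [AddSemigroup A]

/-- An element `z` is cancellable if both translation maps are injective. -/
def Cancellable (z : A) : Prop :=
  Function.Injective (fun x : A => x + z) ∧ Function.Injective (fun x : A => z + x)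

/-- `e` is a two-sided identity of the semigroup. -/
def IsIdentity (e : A) : Prop := ∀ x : A, x + e = x ∧ e + x = x

/-- `u` is a unit: there is a two-sided identity and a two-sided inverse of `u`. -/
def IsUnitElem (u : A) : Prop := ∃ e v : A, IsIdentity e ∧ u + v = e ∧ v + u = e

/-- The inverse of a unit (junk value otherwise). -/
noncomputable def neg (u : A) : A :=
  if h : IsUnitElem u then h.choose_spec.choose else u

/-- `ord a` is the cardinality of the subsemigroup generated by `a`. -/
noncomputable def ord (a : A) : ℕ∞ := (closure {a} : Set A).encard

/-- The units of `A` lying in `W`. -/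
def unitsIn (W : Set A) : Set A := {w ∈ W | IsUnitElem w}

/-- A set is commutative if its elements pairwise commute. -/
def CommOn (S : Set A) : Prop := ∀ a ∈ S, ∀ b ∈ S, a + b = b + a

/-- The Cauchy-Davenport constant of a set. -/
noncomputable def gamma (X : Set A) : ℕ∞ :=
  if X.encard ≤ 1 then X.encard
  else ⨆ x₀ ∈ unitsIn X, ⨅ x ∈ {x ∈ X | x ≠ x₀}, ord (x + neg x₀)

/-- The sumset `X 0 + X 1 + ⋯ + X n` of a tuple of sets. -/
def sumsetTup : (n : ℕ) → (Fin (n + 1) → Set A) → Set A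
  | 0, X => X 0
  | n + 1, X => sumsetTup n (fun i => X i.castSucc) + X (Fin.last (n + 1))

/-- The sum `x 0 + x 1 + ⋯ + x n` of a tuple of elements. -/
def sumTup : (n : ℕ) → (Fin (n + 1) → A) → A
  | 0, x => x 0
  | n + 1, x => sumTup n (fun i => x i.castSucc) + x (Fin.last (n + 1))

/-- `nfold n a` is the `(n+1)`-fold sum `a + a + ⋯ + a`. -/
def nfold : ℕ → A → A
  | 0, a => a
  | n + 1, a => nfold n a + a

/-- `⟨⟨W⟩⟩`, the subsemigroup generated by `W` together with the inverses of its units. -/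
noncomputable def dclosure (W : Set A) : Set A :=
  (closure (W ∪ neg '' unitsIn W) : Set A)

/-- `Ỹ_z = {y ∈ Y : z ∈ X + Y + y}`. -/
noncomputable def Ytil (X Y : Set A) (z : A) : Set A := {y ∈ Y | z ∈ X + Y + {y}}

/-- `z − W = {w : z ∈ w + W}`. -/
def subFrom (z : A) (W : Set A) : Set A := {w : A | ∃ u ∈ W, w + u = z}

end CD

open CD

theorem stmt10 {A : Type*} [AddSemigroup A] [IsCancelAdd A] (X Y : Set A)
    (h1 : ¬ X + (Y + Y) ⊆ X + Y)
    (hcomm : CommOn (AddSubsemigroup.closure Y : Set A))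
    (z : A) (hz : z ∈ (X + (Y + Y)) \ (X + Y)) :
    (X + (Y \ Ytil X Y z)).encard + Y.encard ≤ (X + Y).encard + (Y \ Ytil X Y z).encard := by
  classical
  set Yt := Ytil X Y z with hYt
  have hYtsub : Yt ⊆ Y := fun y hy => hy.1
  have key : Yt.encard ≤ ((X + Y) \ (X + (Y \ Yt))).encard := by
    have hex : ∀ y ∈ Yt, ∃ w ∈ X + Y, w + y = z := by
      intro y hy
      obtain ⟨w, hw, b, hb, hwb⟩ := hy.2
      rw [Set.mem_singleton_iff] at hb
      subst hb
      exact ⟨w, hw, hwb⟩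
    let f : A → A := fun y => if h : ∃ w ∈ X + Y, w + y = z then h.choose else y
    have hf : ∀ y ∈ Yt, f y ∈ X + Y ∧ f y + y = z := by
      intro y hy
      have h := hex y hy
      simp only [f, dif_pos h]
      exact ⟨h.choose_spec.1, h.choose_spec.2⟩
    have hinj : Set.InjOn f Yt := by
      intro y1 h1' y2 h2' heq
      have e1 := (hf y1 h1').2
      have e2 := (hf y2 h2').2
      rw [heq] at e1
      exact add_left_cancel (e1.trans e2.symm)
    have himg : f '' Yt ⊆ (X + Y) \ (X + (Y \ Yt)) := by
      rintro _ ⟨y, hy, rfl⟩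
      refine ⟨(hf y hy).1, ?_⟩
      rintro ⟨x, hx, y', hy', heq⟩
      have hcm : y' + y = y + y' :=
        hcomm y' (AddSubsemigroup.subset_closure hy'.1) y
          (AddSubsemigroup.subset_closure (hYtsub hy))
      have hzeq : (x + y) + y' = z := by
        have := (hf y hy).2
        rw [← heq] at this
        rw [add_assoc, ← hcm, ← add_assoc, this]
      exact hy'.2 ⟨hy'.1, ⟨x + y, ⟨x, hx, y, hYtsub hy, rfl⟩, y', rfl, hzeq⟩⟩
    calc Yt.encard = (f '' Yt).encard := (Set.InjOn.encard_image hinj).symm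
      _ ≤ _ := Set.encard_le_encard himg
  have h2 : X + (Y \ Yt) ⊆ X + Y := Set.add_subset_add_left Set.diff_subset
  have h3 : ((X + Y) \ (X + (Y \ Yt))).encard + (X + (Y \ Yt)).encard = (X + Y).encard :=
    Set.encard_diff_add_encard_of_subset h2
  have h4 : (Y \ Yt).encard + Yt.encard = Y.encard :=
    Set.encard_diff_add_encard_of_subset hYtsub
  calc (X + (Y \ Yt)).encard + Y.encard
      = (X + (Y \ Yt)).encard + ((Y \ Yt).encard + Yt.encard) := by rw [h4]
    _ ≤ (X + (Y \ Yt)).encard + ((Y \ Yt).encard + ((X + Y) \ (X + (Y \ Yt))).encard) := by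
        exact add_le_add_right (add_le_add_right key _) _
    _ = (((X + Y) \ (X + (Y \ Yt))).encard + (X + (Y \ Yt)).encard) + (Y \ Yt).encard := by
        ring
    _ = (X + Y).encard + (Y \ Yt).encard := by rw [h3]
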